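/- Let K be an algebraically closed field of characteristic 2 and let a, b ∈ K with a ≠ 0. Then the parametrization (t^4 + t^6 + a·t^7 + b·t^{11}, t^5) is A-equivalent to (t^4 + t^6 + a·t^7, t^5). -/

import Mathlib

set_option linter.unusedSectionVars false


open PowerSeries

variable {K : Type*} [Field K]

/-- The coefficient of `x^i y^j` in a formal power series in two variables. -/
noncomputable def mvCoeff (f : MvPowerSeries (Fin 2) K) (p : ℕ × ℕ) : K :=
  MvPowerSeries.coeff (R := K) (Finsupp.single (0 : Fin 2) p.1 + Finsupp.single (1 : Fin 2) p.2) f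

/-- Substitution of a pair of power series (of positive order) into a formal power
series in two variables; this realizes the algebra homomorphism
`ψ : K[[x,y]] → K[[t]]`, `x ↦ x(t)`, `y ↦ y(t)` associated to a parametrization. -/
noncomputable def substPair (x y : PowerSeries K) (f : MvPowerSeries (Fin 2) K) :
    PowerSeries K :=
  PowerSeries.mk fun n => ∑ p ∈ Finset.range (n + 1) ×ˢ Finset.range (n + 1),
    mvCoeff f p * PowerSeries.coeff (R := K) n (x ^ p.1 * y ^ p.2)

/-- Two parametrizations `(x(t), y(t))` and `(x̄(t), ȳ(t))` are `𝒜`-equivalent if the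
associated homomorphisms `ψ, φ : K[[x,y]] → K[[t]]` satisfy `φ = r ∘ ψ ∘ l` for some
`K`-algebra automorphism `l` of `K[[x,y]]` and some `K`-algebra automorphism `r` of
`K[[t]]`. -/
def AEquiv (ψ φ : PowerSeries K × PowerSeries K) : Prop :=
  ∃ (l : MvPowerSeries (Fin 2) K ≃ₐ[K] MvPowerSeries (Fin 2) K)
    (r : PowerSeries K ≃ₐ[K] PowerSeries K),
    ∀ f : MvPowerSeries (Fin 2) K,
      substPair φ.1 φ.2 f = r (substPair ψ.1 ψ.2 (l f))

/-- The image `K[[x(t),y(t)]] ⊆ K[[t]]` of a parametrization, as a `K`-submodule. -/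
noncomputable def imageSubmodule (x y : PowerSeries K) : Submodule K (PowerSeries K) :=
  Submodule.span K (Set.range (substPair x y))

/-- A parametrization is primitive if `δ = dim_K K[[t]]/K[[x(t),y(t)]]` is finite. -/
def IsPrimitive (x y : PowerSeries K) : Prop :=
  Module.Finite K (PowerSeries K ⧸ imageSubmodule x y)

/-- The delta invariant `δ(ψ) = dim_K K[[t]]/K[[x(t),y(t)]]`. -/
noncomputable def deltaInv (x y : PowerSeries K) : ℕ :=
  Module.finrank K (PowerSeries K ⧸ imageSubmodule x y)

/-- The semigroup of values `Γ(ψ) = { ord_t h : h ∈ K[[x(t),y(t)]], h ≠ 0 }`. -/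
noncomputable def valueSemigroup (x y : PowerSeries K) : Set ℕ :=
  {n : ℕ | ∃ f : MvPowerSeries (Fin 2) K,
    substPair x y f ≠ 0 ∧ (substPair x y f).order = (n : ℕ∞)}

namespace S11

open MvPowerSeries Finset

variable {K : Type*} [CommRing K]

/-- degree of an exponent finsupp -/
def deg {τ : Type*} (e : τ →₀ ℕ) : ℕ := e.sum fun _ n => n

lemma deg_add {τ : Type*} (a b : τ →₀ ℕ) : deg (a + b) = deg a + deg b :=
  Finsupp.sum_add_index' (fun _ => rfl) (fun _ _ _ => rfl)

lemma deg_eq_zero_iff {τ : Type*} (e : τ →₀ ℕ) : deg e = 0 ↔ e = 0 := by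
  rw [deg, Finsupp.sum]
  rw [Finset.sum_eq_zero_iff]
  constructor
  · intro h
    ext a
    by_cases ha : a ∈ e.support
    · exact h a ha
    · simpa using Finsupp.notMem_support_iff.mp ha
  · rintro rfl; simp

lemma apply_le_deg {τ : Type*} (e : τ →₀ ℕ) (i : τ) : e i ≤ deg e := by
  by_cases h : i ∈ e.support
  · exact Finset.single_le_sum (fun _ _ => Nat.zero_le _) h
  · simp [Finsupp.notMem_support_iff.mp h]

/-- `Van n h`: all coefficients of degree `< n` vanish. -/
def Van {τ : Type*} (n : ℕ) (h : MvPowerSeries τ K) : Prop :=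
  ∀ e : τ →₀ ℕ, deg e < n → MvPowerSeries.coeff e h = 0

lemma Van.mono {τ : Type*} {m n : ℕ} {h : MvPowerSeries τ K} (hv : Van n h) (hmn : m ≤ n) :
    Van m h := fun e he => hv e (lt_of_lt_of_le he hmn)

lemma Van.mul {τ : Type*} {m n : ℕ} {f g : MvPowerSeries τ K} (hf : Van m f) (hg : Van n g) :
    Van (m + n) (f * g) := by
  classical
  intro e he
  rw [MvPowerSeries.coeff_mul]
  refine Finset.sum_eq_zero fun p hp => ?_
  rw [Finset.HasAntidiagonal.mem_antidiagonal] at hp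
  have hdeg : deg p.1 + deg p.2 = deg e := by rw [← deg_add, hp]
  rcases lt_or_ge (deg p.1) m with h1 | h1
  · rw [hf p.1 h1, zero_mul]
  · have : deg p.2 < n := by omega
    rw [hg p.2 this, mul_zero]

lemma Van.pow {τ : Type*} {n : ℕ} {g : MvPowerSeries τ K} (hg : Van n g) (k : ℕ) :
    Van (k * n) (g ^ k) := by
  induction k with
  | zero => intro e he; omega
  | succ k ih =>
    rw [pow_succ, Nat.succ_mul]
    exact ih.mul hg

lemma Van.prod {τ ι : Type*} (s : Finset ι) (F : ι → MvPowerSeries τ K) (m : ι → ℕ)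
    (h : ∀ i ∈ s, Van (m i) (F i)) : Van (∑ i ∈ s, m i) (∏ i ∈ s, F i) := by
  classical
  induction s using Finset.induction with
  | empty => intro e he; simp at he
  | insert a s hi ih =>
    rw [Finset.sum_insert hi, Finset.prod_insert hi]
    exact (h a (Finset.mem_insert_self a s)).mul
      (ih fun i his => h i (Finset.mem_insert_of_mem his))

variable {σ τ : Type*} [Fintype σ] [DecidableEq σ]

/-- truncation index set -/
noncomputable def box (σ : Type*) [Fintype σ] [DecidableEq σ] (N : ℕ) : Finset (σ →₀ ℕ) :=
  Finset.Iic (Finsupp.equivFunOnFinite.symm fun _ => N)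

lemma mem_box {N : ℕ} {d : σ →₀ ℕ} : d ∈ box σ N ↔ ∀ i, d i ≤ N := by
  rw [box, Finset.mem_Iic, Finsupp.le_def]
  constructor
  · intro h i
    simpa using h i
  · intro h i
    simpa using h i

lemma deg_le_mem_box {N : ℕ} {d : σ →₀ ℕ} (h : deg d ≤ N) : d ∈ box σ N :=
  mem_box.mpr fun i => le_trans (apply_le_deg d i) h

/-- Substitution of the family `g` into `f`. -/
noncomputable def gsubst (g : σ → MvPowerSeries τ K) (f : MvPowerSeries σ K) :
    MvPowerSeries τ K :=
  fun e => ∑ d ∈ box σ (deg e),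
    MvPowerSeries.coeff d f * MvPowerSeries.coeff e (∏ i, g i ^ d i)

lemma coeff_gsubst (g : σ → MvPowerSeries τ K) (f : MvPowerSeries σ K) (e : τ →₀ ℕ) :
    MvPowerSeries.coeff e (gsubst g f) =
      ∑ d ∈ box σ (deg e),
        MvPowerSeries.coeff d f * MvPowerSeries.coeff e (∏ i, g i ^ d i) := rfl

lemma van_prod_pow {g : σ → MvPowerSeries τ K} (hg : ∀ i, Van 1 (g i)) (d : σ →₀ ℕ) :
    Van (deg d) (∏ i, g i ^ d i) := by
  have : Van (∑ i ∈ Finset.univ, d i * 1) (∏ i ∈ Finset.univ, g i ^ d i) :=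
    Van.prod _ _ _ (fun i _ => (hg i).pow (d i))
  have hd : (∑ i ∈ Finset.univ, d i * 1) = deg d := by
    simp [deg, Finsupp.sum_fintype]
  rwa [hd] at this

/-- flexibility: any index set containing all `d` with `deg d ≤ deg e` works. -/
lemma coeff_gsubst_eq {g : σ → MvPowerSeries τ K} (hg : ∀ i, Van 1 (g i))
    (f : MvPowerSeries σ K) (e : τ →₀ ℕ) (S : Finset (σ →₀ ℕ))
    (hS : ∀ d : σ →₀ ℕ, deg d ≤ deg e → d ∈ S) :
    MvPowerSeries.coeff e (gsubst g f) =
      ∑ d ∈ S, MvPowerSeries.coeff d f * MvPowerSeries.coeff e (∏ i, g i ^ d i) := by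
  classical
  have key : ∀ (T : Finset (σ →₀ ℕ)), (∀ d, deg d ≤ deg e → d ∈ T) →
      ∑ d ∈ T, MvPowerSeries.coeff d f * MvPowerSeries.coeff e (∏ i, g i ^ d i)
      = ∑ d ∈ T ∪ S ∪ box σ (deg e),
          MvPowerSeries.coeff d f * MvPowerSeries.coeff e (∏ i, g i ^ d i) := by
    intro T hT
    refine Finset.sum_subset (Finset.subset_union_left.trans Finset.subset_union_left) ?_
    intro d _ hd
    have : deg e < deg d := by
      by_contra hle
      exact hd (hT d (le_of_not_gt hle))
    rw [van_prod_pow hg d e this, mul_zero]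
  rw [coeff_gsubst, key (box σ (deg e)) (fun d hd => deg_le_mem_box hd), key S hS]
  congr 1
  ext d
  simp only [Finset.mem_union]
  tauto


lemma prodpow_add (g : σ → MvPowerSeries τ K) (q1 q2 : σ →₀ ℕ) :
    (∏ i, g i ^ (q1 + q2) i) = (∏ i, g i ^ q1 i) * (∏ i, g i ^ q2 i) := by
  rw [← Finset.prod_mul_distrib]
  exact Finset.prod_congr rfl fun i _ => by rw [Finsupp.add_apply, pow_add]

lemma gsubst_add (g : σ → MvPowerSeries τ K) (f₁ f₂ : MvPowerSeries σ K) :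
    gsubst g (f₁ + f₂) = gsubst g f₁ + gsubst g f₂ := by
  apply MvPowerSeries.ext; intro e
  rw [map_add, coeff_gsubst, coeff_gsubst, coeff_gsubst, ← Finset.sum_add_distrib]
  exact Finset.sum_congr rfl fun d _ => by rw [map_add, add_mul]

lemma gsubst_smul (g : σ → MvPowerSeries τ K) (c : K) (f : MvPowerSeries σ K) :
    gsubst g (c • f) = c • gsubst g f := by
  apply MvPowerSeries.ext; intro e
  rw [map_smul, coeff_gsubst, coeff_gsubst, Finset.smul_sum]
  exact Finset.sum_congr rfl fun d _ => by rw [map_smul, smul_eq_mul, smul_eq_mul, mul_assoc]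

lemma gsubst_monomial (g : σ → MvPowerSeries τ K) (hg : ∀ i, Van 1 (g i)) (d : σ →₀ ℕ) (c : K) :
    gsubst g (MvPowerSeries.monomial d c) = MvPowerSeries.C (σ := τ) (R := K) c * ∏ i, g i ^ d i := by
  apply MvPowerSeries.ext; intro e
  have hCmul : MvPowerSeries.coeff e (MvPowerSeries.C (σ := τ) (R := K) c * ∏ i, g i ^ d i)
      = c * MvPowerSeries.coeff e (∏ i, g i ^ d i) := by
    rw [← MvPowerSeries.smul_eq_C_mul, map_smul, smul_eq_mul]
  rw [hCmul, coeff_gsubst]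
  by_cases hd : d ∈ box σ (deg e)
  · rw [Finset.sum_eq_single d]
    · rw [MvPowerSeries.coeff_monomial_same]
    · intro d' _ hne
      rw [MvPowerSeries.coeff_monomial_ne hne, zero_mul]
    · intro h; exact absurd hd h
  · have hdeg : deg e < deg d := by
      by_contra hle
      exact hd (deg_le_mem_box (le_of_not_gt hle))
    rw [Finset.sum_eq_zero, van_prod_pow hg d e hdeg, mul_zero]
    intro d' hd'
    rcases eq_or_ne d' d with rfl | hne
    · exact absurd hd' hd
    · rw [MvPowerSeries.coeff_monomial_ne hne, zero_mul]

lemma gsubst_C (g : σ → MvPowerSeries τ K) (hg : ∀ i, Van 1 (g i)) (c : K) :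
    gsubst g (MvPowerSeries.C (σ := σ) (R := K) c) = MvPowerSeries.C (σ := τ) (R := K) c := by
  have h : (MvPowerSeries.C (σ := σ) (R := K) c) = MvPowerSeries.monomial 0 c := rfl
  rw [h, gsubst_monomial g hg]
  simp

lemma gsubst_one (g : σ → MvPowerSeries τ K) (hg : ∀ i, Van 1 (g i)) :
    gsubst g (1 : MvPowerSeries σ K) = 1 := by
  have h : (1 : MvPowerSeries σ K) = MvPowerSeries.C (σ := σ) (R := K) 1 := rfl
  rw [h, gsubst_C g hg, map_one]

lemma gsubst_X (g : σ → MvPowerSeries τ K) (hg : ∀ i, Van 1 (g i)) (i : σ) :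
    gsubst g (MvPowerSeries.X i) = g i := by
  have hX : (MvPowerSeries.X i : MvPowerSeries σ K)
      = MvPowerSeries.monomial (Finsupp.single i 1) 1 := rfl
  rw [hX, gsubst_monomial g hg, map_one, one_mul]
  rw [Finset.prod_eq_single i]
  · simp
  · intro j _ hne
    rw [Finsupp.single_eq_of_ne hne, pow_zero]
  · intro h; exact absurd (Finset.mem_univ i) h

lemma gsubst_mul (g : σ → MvPowerSeries τ K) (hg : ∀ i, Van 1 (g i))
    (f₁ f₂ : MvPowerSeries σ K) :
    gsubst g (f₁ * f₂) = gsubst g f₁ * gsubst g f₂ := by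
  classical
  apply MvPowerSeries.ext; intro e
  set B := box σ (deg e) with hB
  -- RHS
  rw [MvPowerSeries.coeff_mul]
  have hRHS : ∀ p : (τ →₀ ℕ) × (τ →₀ ℕ), p ∈ Finset.HasAntidiagonal.antidiagonal e →
      MvPowerSeries.coeff p.1 (gsubst g f₁) * MvPowerSeries.coeff p.2 (gsubst g f₂)
      = ∑ q ∈ B ×ˢ B, MvPowerSeries.coeff q.1 f₁ * MvPowerSeries.coeff q.2 f₂ *
          (MvPowerSeries.coeff p.1 (∏ i, g i ^ q.1 i)
            * MvPowerSeries.coeff p.2 (∏ i, g i ^ q.2 i)) := by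
    intro p hp
    rw [Finset.HasAntidiagonal.mem_antidiagonal] at hp
    have h1 : deg p.1 ≤ deg e := by rw [← hp, deg_add]; omega
    have h2 : deg p.2 ≤ deg e := by rw [← hp, deg_add]; omega
    rw [coeff_gsubst_eq hg f₁ p.1 B (fun d hd => deg_le_mem_box (le_trans hd h1)),
        coeff_gsubst_eq hg f₂ p.2 B (fun d hd => deg_le_mem_box (le_trans hd h2)),
        Finset.sum_mul_sum, ← Finset.sum_product']
    exact Finset.sum_congr rfl fun q _ => by ring
  rw [Finset.sum_congr rfl hRHS, Finset.sum_comm]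
  -- LHS
  rw [coeff_gsubst]
  have hL : ∀ d ∈ B, MvPowerSeries.coeff d (f₁ * f₂) * MvPowerSeries.coeff e (∏ i, g i ^ d i)
      = ∑ q ∈ Finset.HasAntidiagonal.antidiagonal d,
          MvPowerSeries.coeff q.1 f₁ * MvPowerSeries.coeff q.2 f₂
            * MvPowerSeries.coeff e (∏ i, g i ^ d i) := by
    intro d _
    rw [MvPowerSeries.coeff_mul, Finset.sum_mul]
  rw [Finset.sum_congr rfl hL]
  -- reindex LHS over pairs with q1+q2 ∈ B
  have key : ∑ d ∈ B, ∑ q ∈ Finset.HasAntidiagonal.antidiagonal d,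
      MvPowerSeries.coeff q.1 f₁ * MvPowerSeries.coeff q.2 f₂
        * MvPowerSeries.coeff e (∏ i, g i ^ d i)
      = ∑ q ∈ (B ×ˢ B).filter (fun q => q.1 + q.2 ∈ B),
          MvPowerSeries.coeff q.1 f₁ * MvPowerSeries.coeff q.2 f₂
            * MvPowerSeries.coeff e (∏ i, g i ^ (q.1 + q.2) i) := by
    rw [Finset.sum_sigma']
    refine Finset.sum_nbij' (fun x => (x.2.1, x.2.2)) (fun q => ⟨q.1 + q.2, (q.1, q.2)⟩)
      ?_ ?_ ?_ ?_ ?_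
    · rintro ⟨d, q⟩ hx
      simp only [Finset.mem_sigma, Finset.HasAntidiagonal.mem_antidiagonal] at hx
      obtain ⟨hd, hq⟩ := hx
      rw [Finset.mem_filter, Finset.mem_product]
      have hq1 : q.1 ≤ d := by rw [← hq]; exact le_add_of_nonneg_right zero_le
      have hq2 : q.2 ≤ d := by rw [← hq]; exact le_add_of_nonneg_left zero_le
      refine ⟨⟨?_, ?_⟩, by rw [hq]; exact hd⟩
      · rw [mem_box]; intro i; exact le_trans (hq1 i) (mem_box.mp hd i)
      · rw [mem_box]; intro i; exact le_trans (hq2 i) (mem_box.mp hd i)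
    · rintro ⟨q1, q2⟩ hq
      rw [Finset.mem_filter] at hq
      simp only [Finset.mem_sigma, Finset.HasAntidiagonal.mem_antidiagonal]
      exact ⟨hq.2, trivial⟩
    · rintro ⟨d, q⟩ hx
      simp only [Finset.mem_sigma, Finset.HasAntidiagonal.mem_antidiagonal] at hx
      obtain ⟨-, hq⟩ := hx
      simp [hq]
    · rintro ⟨q1, q2⟩ hq; rfl
    · rintro ⟨d, q⟩ hx
      simp only [Finset.mem_sigma, Finset.HasAntidiagonal.mem_antidiagonal] at hx
      obtain ⟨-, hq⟩ := hx
      rw [hq]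
  rw [key]
  -- extend filter to full product
  have ext1 : ∑ q ∈ (B ×ˢ B).filter (fun q => q.1 + q.2 ∈ B),
      MvPowerSeries.coeff q.1 f₁ * MvPowerSeries.coeff q.2 f₂
        * MvPowerSeries.coeff e (∏ i, g i ^ (q.1 + q.2) i)
      = ∑ q ∈ B ×ˢ B,
          MvPowerSeries.coeff q.1 f₁ * MvPowerSeries.coeff q.2 f₂
            * MvPowerSeries.coeff e (∏ i, g i ^ (q.1 + q.2) i) := by
    refine Finset.sum_subset (Finset.filter_subset _ _) ?_
    intro q hq hq'
    rw [Finset.mem_filter] at hq'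
    have hnot : q.1 + q.2 ∉ B := fun h => hq' ⟨hq, h⟩
    have hdeg : deg e < deg (q.1 + q.2) := by
      by_contra hle
      exact hnot (deg_le_mem_box (le_of_not_gt hle))
    rw [van_prod_pow hg _ e hdeg, mul_zero]
  rw [ext1]
  -- pointwise: expand coeff of product
  refine Finset.sum_congr rfl fun q _ => ?_
  rw [prodpow_add, MvPowerSeries.coeff_mul, Finset.mul_sum]


lemma gsubst_zero (g : σ → MvPowerSeries τ K) : gsubst g (0 : MvPowerSeries σ K) = 0 := by
  apply MvPowerSeries.ext; intro e
  rw [coeff_gsubst, map_zero]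
  exact Finset.sum_eq_zero fun d _ => by rw [map_zero, zero_mul]

/-- `gsubst` as an algebra homomorphism. -/
noncomputable def gsubstHom (g : σ → MvPowerSeries τ K) (hg : ∀ i, Van 1 (g i)) :
    MvPowerSeries σ K →ₐ[K] MvPowerSeries τ K where
  toFun := gsubst g
  map_one' := gsubst_one g hg
  map_mul' := gsubst_mul g hg
  map_zero' := gsubst_zero g
  map_add' := gsubst_add g
  commutes' := fun c => by
    rw [← MvPowerSeries.c_eq_algebraMap, ← MvPowerSeries.c_eq_algebraMap]
    exact gsubst_C g hg c

@[simp] lemma gsubstHom_apply (g : σ → MvPowerSeries τ K) (hg : ∀ i, Van 1 (g i))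
    (f : MvPowerSeries σ K) : gsubstHom g hg f = gsubst g f := rfl

lemma prod_X_pow_eq_monomial (d : σ →₀ ℕ) :
    (∏ i, (MvPowerSeries.X i : MvPowerSeries σ K) ^ d i) = MvPowerSeries.monomial d 1 := by
  classical
  have : ∀ s : Finset σ, (∏ i ∈ s, (MvPowerSeries.X i : MvPowerSeries σ K) ^ d i)
      = MvPowerSeries.monomial (∑ i ∈ s, Finsupp.single i (d i)) 1 := by
    intro s
    induction s using Finset.induction with
    | empty => simp
    | insert a s hi ih =>
      rw [Finset.prod_insert hi, Finset.sum_insert hi, ih, MvPowerSeries.X_pow_eq,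
        MvPowerSeries.monomial_mul_monomial, one_mul]
  have h1 : (∑ i : σ, Finsupp.single i (d i)) = d := by
    rw [← Finsupp.sum_fintype d (fun i n => Finsupp.single i n)
      (fun i => Finsupp.single_zero i)]
    exact Finsupp.sum_single d
  rw [this Finset.univ, h1]

lemma gsubst_X_self (f : MvPowerSeries σ K) :
    gsubst (fun i => (MvPowerSeries.X i : MvPowerSeries σ K)) f = f := by
  apply MvPowerSeries.ext; intro e
  rw [coeff_gsubst]
  have he : e ∈ box σ (deg e) := deg_le_mem_box le_rfl
  rw [Finset.sum_eq_single e]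
  · rw [prod_X_pow_eq_monomial, MvPowerSeries.coeff_monomial_same, mul_one]
  · intro d _ hne
    rw [prod_X_pow_eq_monomial, MvPowerSeries.coeff_monomial_ne (Ne.symm hne), mul_zero]
  · intro h; exact absurd he h

lemma Van.gsubst {k : ℕ} {f : MvPowerSeries σ K} (hf : Van k f)
    (g : σ → MvPowerSeries τ K) (hg : ∀ i, Van 1 (g i)) : Van k (S11.gsubst g f) := by
  intro e he
  rw [coeff_gsubst]
  refine Finset.sum_eq_zero fun d _ => ?_
  rcases lt_or_ge (deg d) k with h | h
  · rw [hf d h, zero_mul]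
  · rw [van_prod_pow hg d e (lt_of_lt_of_le he h), mul_zero]

lemma gsubst_van_one (g : σ → MvPowerSeries τ K) (hg : ∀ i, Van 1 (g i))
    {w : MvPowerSeries σ K} (hw : Van 1 w) : Van 1 (gsubst g w) :=
  hw.gsubst g hg

/-- Composition law for substitution. -/
lemma gsubst_gsubst {υ : Type*} [Fintype τ] [DecidableEq τ]
    (g : σ → MvPowerSeries τ K) (h : τ → MvPowerSeries υ K)
    (hg : ∀ i, Van 1 (g i)) (hh : ∀ j, Van 1 (h j)) (f : MvPowerSeries σ K) :
    gsubst h (gsubst g f) = gsubst (fun i => gsubst h (g i)) f := by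
  classical
  apply MvPowerSeries.ext; intro e
  set N := deg e with hN
  set M := Fintype.card τ * N + N with hM
  have hdeg' : ∀ d' : τ →₀ ℕ, d' ∈ box τ N → deg d' ≤ M := by
    intro d' hd'
    have : deg d' = ∑ j ∈ Finset.univ, d' j := by simp [deg, Finsupp.sum_fintype]
    rw [this]
    calc ∑ j ∈ Finset.univ, d' j ≤ ∑ _j ∈ (Finset.univ : Finset τ), N :=
          Finset.sum_le_sum fun j _ => mem_box.mp hd' j
      _ = Fintype.card τ * N := by rw [Finset.sum_const, smul_eq_mul, Fintype.card]
      _ ≤ M := by omega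
  rw [coeff_gsubst]
  have step1 : ∀ d' ∈ box τ N,
      MvPowerSeries.coeff d' (gsubst g f) * MvPowerSeries.coeff e (∏ j, h j ^ d' j)
      = ∑ d ∈ box σ M, MvPowerSeries.coeff d f * MvPowerSeries.coeff d' (∏ i, g i ^ d i)
          * MvPowerSeries.coeff e (∏ j, h j ^ d' j) := by
    intro d' hd'
    rw [coeff_gsubst_eq hg f d' (box σ M)
      (fun d hd => deg_le_mem_box (le_trans hd (hdeg' d' hd'))), Finset.sum_mul]
  rw [Finset.sum_congr rfl step1, Finset.sum_comm]
  have step2 : ∀ d ∈ box σ M,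
      (∑ d' ∈ box τ N, MvPowerSeries.coeff d f
          * MvPowerSeries.coeff d' (∏ i, g i ^ d i)
          * MvPowerSeries.coeff e (∏ j, h j ^ d' j))
      = MvPowerSeries.coeff d f
          * MvPowerSeries.coeff e (∏ i, (gsubst h (g i)) ^ d i) := by
    intro d _
    have hmap : (∏ i, (gsubst h (g i)) ^ d i) = gsubst h (∏ i, g i ^ d i) := by
      have := map_prod (gsubstHom h hh) (fun i => g i ^ d i) Finset.univ
      simp only [map_pow, gsubstHom_apply] at this
      rw [← this]
    rw [hmap, coeff_gsubst]
    rw [Finset.mul_sum]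
    exact Finset.sum_congr rfl fun d' _ => by ring
  rw [Finset.sum_congr rfl step2]
  rw [coeff_gsubst_eq (fun i => gsubst_van_one h hh (hg i)) f e (box σ M)
    (fun d hd => deg_le_mem_box (by omega))]


lemma Van.add' {τ' : Type*} {n : ℕ} {f g : MvPowerSeries τ' K} (hf : Van n f) (hg : Van n g) :
    Van n (f + g) := fun e he => by rw [map_add, hf e he, hg e he, add_zero]

lemma Van.neg' {τ' : Type*} {n : ℕ} {f : MvPowerSeries τ' K} (hf : Van n f) :
    Van n (-f) := fun e he => by rw [map_neg, hf e he, neg_zero]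

lemma Van.sub' {τ' : Type*} {n : ℕ} {f g : MvPowerSeries τ' K} (hf : Van n f) (hg : Van n g) :
    Van n (f - g) := fun e he => by rw [map_sub, hf e he, hg e he, sub_zero]

lemma Van.zero' {τ' : Type*} (n : ℕ) : Van n (0 : MvPowerSeries τ' K) :=
  fun e _ => map_zero _

lemma Van.sum' {τ' ι : Type*} {n : ℕ} (s : Finset ι) (F : ι → MvPowerSeries τ' K)
    (h : ∀ i ∈ s, Van n (F i)) : Van n (∑ i ∈ s, F i) := fun e he => by
  rw [map_sum]
  exact Finset.sum_eq_zero fun i hi => h i hi e he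

lemma van_X {τ' : Type*} [DecidableEq τ'] (i : τ') : Van 1 (MvPowerSeries.X i : MvPowerSeries τ' K) := by
  intro e he
  have he0 : e = 0 := (deg_eq_zero_iff e).mp (by omega)
  subst he0
  rw [MvPowerSeries.X, MvPowerSeries.coeff_monomial_ne]
  intro h
  have := congrArg (fun f : τ' →₀ ℕ => f i) h
  simp at this

lemma van_pow_sub {τ' : Type*} {m : ℕ} {g g' : MvPowerSeries τ' K}
    (hg : Van 1 g) (hg' : Van 1 g') (hd : Van (m + 1) (g - g')) (k : ℕ) :
    Van (m + k) (g ^ k - g' ^ k) := by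
  classical
  cases k with
  | zero => simpa using Van.zero' (m + 0)
  | succ k =>
    have hgeom := geom_sum₂_mul g g' (k + 1)
    rw [← hgeom]
    have hsum : Van k (∑ i ∈ Finset.range (k + 1), g ^ i * g' ^ (k - i)) := by
      refine Van.sum' _ _ fun i hi => ?_
      rw [Finset.mem_range] at hi
      have h1 : Van i (g ^ i) := by simpa using hg.pow i
      have h2 : Van (k - i) (g' ^ (k - i)) := by simpa using hg'.pow (k - i)
      have := h1.mul h2
      exact this.mono (by omega)
    have := hsum.mul hd
    exact this.mono (by omega)

lemma van_prod_sub {τ' : Type*} {m : ℕ} {g g' : σ → MvPowerSeries τ' K}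
    (hg : ∀ i, Van 1 (g i)) (hg' : ∀ i, Van 1 (g' i))
    (hd : ∀ i, Van (m + 1) (g i - g' i)) (d : σ →₀ ℕ) :
    Van (m + deg d) ((∏ i, g i ^ d i) - ∏ i, g' i ^ d i) := by
  classical
  have main : ∀ s : Finset σ, Van (m + ∑ i ∈ s, d i)
      ((∏ i ∈ s, g i ^ d i) - ∏ i ∈ s, g' i ^ d i) := by
    intro s
    induction s using Finset.induction with
    | empty => simpa using Van.zero' m
    | insert a s hi ih =>
      rw [Finset.prod_insert hi, Finset.prod_insert hi, Finset.sum_insert hi]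
      have hid : (g a ^ d a) * (∏ i ∈ s, g i ^ d i) - (g' a ^ d a) * ∏ i ∈ s, g' i ^ d i
          = g a ^ d a * ((∏ i ∈ s, g i ^ d i) - ∏ i ∈ s, g' i ^ d i)
            + (g a ^ d a - g' a ^ d a) * ∏ i ∈ s, g' i ^ d i := by ring
      rw [hid]
      have t1 : Van (d a + (m + ∑ i ∈ s, d i)) (g a ^ d a *
          ((∏ i ∈ s, g i ^ d i) - ∏ i ∈ s, g' i ^ d i)) := by
        have := ((hg a).pow (d a)).mul ih
        simpa using this
      have t2 : Van ((m + d a) + ∑ i ∈ s, d i) ((g a ^ d a - g' a ^ d a) *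
          ∏ i ∈ s, g' i ^ d i) := by
        have hpow := van_pow_sub (hg a) (hg' a) (hd a) (d a)
        have hprod : Van (∑ i ∈ s, d i) (∏ i ∈ s, g' i ^ d i) := by
          have := Van.prod s (fun i => g' i ^ d i) (fun i => d i)
            (fun i _ => by simpa using (hg' i).pow (d i))
          simpa using this
        exact hpow.mul hprod
      exact (t1.mono (by omega)).add' (t2.mono (by omega))
  have hdeg : deg d = ∑ i ∈ Finset.univ, d i := by simp [deg, Finsupp.sum_fintype]
  rw [hdeg]
  exact main Finset.univ

/-- substitution into a `Van 2` series depends on the family only up to high degree -/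
lemma gsubst_sub_van {f : MvPowerSeries σ K} (hf : Van 2 f) {m : ℕ}
    {g g' : σ → MvPowerSeries σ K} (hg : ∀ i, Van 1 (g i)) (hg' : ∀ i, Van 1 (g' i))
    (hd : ∀ i, Van (m + 1) (g i - g' i)) :
    Van (m + 2) (gsubst g f - gsubst g' f) := by
  intro e he
  rw [map_sub, coeff_gsubst, coeff_gsubst, ← Finset.sum_sub_distrib]
  refine Finset.sum_eq_zero fun d _ => ?_
  rw [← mul_sub]
  rcases lt_or_ge (deg d) 2 with h2 | h2
  · rw [hf d h2, zero_mul]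
  · have := van_prod_sub hg hg' hd d
    have hc : MvPowerSeries.coeff e ((∏ i, g i ^ d i) - ∏ i, g' i ^ d i) = 0 :=
      this e (by omega)
    rw [map_sub] at hc
    rw [hc, mul_zero]

section IFT
variable (h : σ → MvPowerSeries σ K)

/-- iteration for the formal inverse function theorem -/
noncomputable def iter : ℕ → σ → MvPowerSeries σ K
  | 0 => fun i => MvPowerSeries.X i
  | (k + 1) => fun i => MvPowerSeries.X i - gsubst (iter k) (h i)

variable [DecidableEq σ] (hh : ∀ i, Van 2 (h i))
include hh

lemma iter_van (k : ℕ) : ∀ i, Van 1 (iter h k i) := by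
  induction k with
  | zero => intro i; exact van_X i
  | succ k ih =>
    intro i
    exact (van_X i).sub' (((hh i).mono (by omega)).gsubst _ ih)

lemma iter_stab (k : ℕ) : ∀ i, Van (k + 2) (iter h (k + 1) i - iter h k i) := by
  induction k with
  | zero =>
    intro i
    have : iter h 1 i - iter h 0 i = -(h i) := by
      show (MvPowerSeries.X i - gsubst (iter h 0) (h i)) - MvPowerSeries.X i = -(h i)
      rw [show iter h 0 = fun j => (MvPowerSeries.X j : MvPowerSeries σ K) from rfl]
      rw [gsubst_X_self]
      ring
    rw [this]
    exact (hh i).neg'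
  | succ k ih =>
    intro i
    have : iter h (k + 2) i - iter h (k + 1) i
        = -(gsubst (iter h (k + 1)) (h i) - gsubst (iter h k) (h i)) := by
      show (MvPowerSeries.X i - _) - (MvPowerSeries.X i - _) = _
      ring
    rw [this]
    refine Van.neg' ?_
    have := gsubst_sub_van (hh i) (iter_van h hh (k + 1)) (iter_van h hh k) ih
    exact this.mono (by omega)

/-- the inverse family -/
noncomputable def ginv : σ → MvPowerSeries σ K :=
  fun i => (fun e => MvPowerSeries.coeff e (iter h (deg e) i) : MvPowerSeries σ K)

omit hh in
lemma coeff_ginv (i : σ) (e : σ →₀ ℕ) :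
    MvPowerSeries.coeff e (ginv h i) = MvPowerSeries.coeff e (iter h (deg e) i) := rfl

lemma ginv_stab (i : σ) (e : σ →₀ ℕ) (k : ℕ) (hk : deg e ≤ k) :
    MvPowerSeries.coeff e (iter h k i) = MvPowerSeries.coeff e (ginv h i) := by
  induction k with
  | zero =>
    rw [coeff_ginv]
    have : deg e = 0 := by omega
    rw [this]
  | succ k ih =>
    rcases Nat.lt_or_ge (deg e) (k + 1) with hlt | hge
    · have hs := iter_stab h hh k i e (by omega)
      rw [map_sub, sub_eq_zero] at hs
      rw [hs]
      exact ih (by omega)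
    · have : deg e = k + 1 := by omega
      rw [coeff_ginv, this]

lemma ginv_van (i : σ) : Van 1 (ginv h i) := by
  intro e he
  rw [coeff_ginv]
  exact iter_van h hh (deg e) i e he

lemma ginv_sub_iter_van (k : ℕ) (i : σ) : Van (k + 1) (ginv h i - iter h k i) := by
  intro e he
  rw [map_sub, ← ginv_stab h hh i e k (by omega), sub_self]

/-- fixed point equation -/
lemma ginv_fixed (i : σ) :
    ginv h i = MvPowerSeries.X i - gsubst (ginv h) (h i) := by
  apply MvPowerSeries.ext; intro e
  set N := deg e with hN
  rw [coeff_ginv]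
  have h1 : MvPowerSeries.coeff e (iter h N i)
      = MvPowerSeries.coeff e (iter h (N + 1) i) := by
    have hs := iter_stab h hh N i e (by omega)
    rw [map_sub, sub_eq_zero] at hs
    rw [hs]
  rw [h1]
  show MvPowerSeries.coeff e (MvPowerSeries.X i - gsubst (iter h N) (h i)) = _
  rw [map_sub, map_sub]
  congr 1
  have hv := gsubst_sub_van (hh i) (ginv_van h hh) (iter_van h hh N)
    (fun j => ginv_sub_iter_van h hh N j)
  have := hv e (by omega)
  rw [map_sub, sub_eq_zero] at this
  rw [this]

lemma ginv_comp_X (i : σ) :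
    gsubst (ginv h) (MvPowerSeries.X i + h i) = MvPowerSeries.X i := by
  rw [gsubst_add, gsubst_X _ (ginv_van h hh), ginv_fixed h hh i]
  ring

/-- The left-composition identity:  gsubst (ginv h) ∘ gsubst (X + h) = id. -/
lemma ginv_comp (f : MvPowerSeries σ K) :
    gsubst (ginv h) (gsubst (fun i => MvPowerSeries.X i + h i) f) = f := by
  have hg : ∀ i, Van 1 ((fun i => MvPowerSeries.X i + h i) i) :=
    fun i => (van_X i).add' ((hh i).mono (by omega))
  rw [gsubst_gsubst _ _ hg (ginv_van h hh) f]
  have : (fun i => gsubst (ginv h) (MvPowerSeries.X i + h i))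
      = fun i => (MvPowerSeries.X i : MvPowerSeries σ K) := by
    funext i
    rw [gsubst_add, gsubst_X _ (ginv_van h hh)]
    rw [ginv_fixed h hh i]
    ring
  rw [this, gsubst_X_self]


lemma ginv_eq (i : σ) :
    ginv h i = MvPowerSeries.X i + -(gsubst (ginv h) (h i)) := by
  rw [ginv_fixed h hh i]; ring

lemma comp_ginv (f : MvPowerSeries σ K) :
    gsubst (fun i => MvPowerSeries.X i + h i) (gsubst (ginv h) f) = f := by
  set h' : σ → MvPowerSeries σ K := fun i => -(gsubst (ginv h) (h i)) with hh'def
  have hh' : ∀ i, Van 2 (h' i) := fun i => ((hh i).gsubst _ (ginv_van h hh)).neg'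
  have hBeq : (fun i => MvPowerSeries.X i + h' i) = ginv h := by
    funext i
    rw [← ginv_eq h hh i]
  have E1 : ∀ f', gsubst (ginv h) (gsubst (fun i => MvPowerSeries.X i + h i) f') = f' :=
    ginv_comp h hh
  have E2 : ∀ f', gsubst (ginv h') (gsubst (ginv h) f') = f' := by
    intro f'
    have := ginv_comp h' hh' f'
    rwa [hBeq] at this
  set y := gsubst (fun i => MvPowerSeries.X i + h i) (gsubst (ginv h) f) with hy
  have step1 : gsubst (ginv h) y = gsubst (ginv h) f := by
    rw [hy, E1]
  calc y = gsubst (ginv h') (gsubst (ginv h) y) := (E2 y).symm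
    _ = gsubst (ginv h') (gsubst (ginv h) f) := by rw [step1]
    _ = f := E2 f

/-- The automorphism `X i ↦ X i + h i` for `h i ∈ 𝔪²`. -/
noncomputable def gAut : MvPowerSeries σ K ≃ₐ[K] MvPowerSeries σ K where
  toFun := gsubst (fun i => MvPowerSeries.X i + h i)
  invFun := gsubst (ginv h)
  left_inv := ginv_comp h hh
  right_inv := comp_ginv h hh
  map_mul' := gsubst_mul _ (fun i => (van_X i).add' ((hh i).mono (by omega)))
  map_add' := gsubst_add _
  commutes' := fun c =>
    gsubst_C _ (fun i => (van_X i).add' ((hh i).mono (by omega))) c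

lemma gAut_apply (f : MvPowerSeries σ K) :
    gAut h hh f = gsubst (fun i => MvPowerSeries.X i + h i) f := rfl

/-- The automorphism given by the inverse substitution. -/
noncomputable def gAut' : MvPowerSeries σ K ≃ₐ[K] MvPowerSeries σ K where
  toFun := gsubst (ginv h)
  invFun := gsubst (fun i => MvPowerSeries.X i + h i)
  left_inv := comp_ginv h hh
  right_inv := ginv_comp h hh
  map_mul' := gsubst_mul _ (ginv_van h hh)
  map_add' := gsubst_add _
  commutes' := fun c => gsubst_C _ (ginv_van h hh) c

lemma gAut'_apply (f : MvPowerSeries σ K) :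
    gAut' h hh f = gsubst (ginv h) f := rfl

end IFT


/-! ### Bridge between `PowerSeries` and `MvPowerSeries Unit` -/

lemma unit_eq_single (e : Unit →₀ ℕ) : e = Finsupp.single () (e ()) := by
  ext u
  simp [Finsupp.single_apply]

lemma deg_single_unit (n : ℕ) : deg ((Finsupp.single () n : Unit →₀ ℕ)) = n :=
  Finsupp.sum_single_index rfl

lemma deg_unit (e : Unit →₀ ℕ) : deg e = e () := by
  conv_lhs => rw [unit_eq_single e]
  exact deg_single_unit (e ())

lemma ps_coeff_eq (n : ℕ) (z : PowerSeries K) :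
    PowerSeries.coeff n z = MvPowerSeries.coeff (Finsupp.single () n) z := rfl

lemma van_iff (k : ℕ) (z : PowerSeries K) :
    Van k z ↔ ∀ m < k, PowerSeries.coeff m z = 0 := by
  constructor
  · intro hv m hm
    rw [ps_coeff_eq]
    exact hv _ (by rw [deg_unit]; simpa using hm)
  · intro hc e he
    rw [deg_unit] at he
    rw [unit_eq_single e]
    exact hc _ he

lemma coeff_lead_mul {p q : ℕ} {f g : PowerSeries K} (hf : Van p f) (hg : Van q g) :
    PowerSeries.coeff (p + q) (f * g)
      = PowerSeries.coeff p f * PowerSeries.coeff q g := by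
  rw [PowerSeries.coeff_mul]
  refine Finset.sum_eq_single_of_mem (p, q) (Finset.HasAntidiagonal.mem_antidiagonal.mpr rfl) ?_
  intro pq hpq hne
  rw [Finset.HasAntidiagonal.mem_antidiagonal] at hpq
  rcases lt_or_ge pq.1 p with h1 | h1
  · rw [(van_iff p f).mp hf pq.1 h1, zero_mul]
  · have h2 : pq.2 < q := by
      rcases lt_or_eq_of_le h1 with h | h
      · omega
      · exfalso
        apply hne
        have : pq.2 = q := by omega
        exact Prod.ext h.symm this
    rw [(van_iff q g).mp hg pq.2 h2, mul_zero]

lemma coeff_lead_pow {p : ℕ} {f : PowerSeries K} (hf : Van p f) (k : ℕ) :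
    PowerSeries.coeff (k * p) (f ^ k) = (PowerSeries.coeff p f) ^ k := by
  induction k with
  | zero => simp
  | succ k ih =>
    have hfk : Van (k * p) (f ^ k) := by simpa using hf.pow k
    rw [pow_succ, pow_succ, show (k + 1) * p = k * p + p by ring,
      coeff_lead_mul hfk hf, ih]

/-! ### The reduction construction for the semigroup `⟨4,5⟩` -/

section Reduce
variable (x y : PowerSeries K)

/-- `Ψ d = x^(d 0) * y^(d 1)` -/
noncomputable def Psi (d : Fin 2 →₀ ℕ) : PowerSeries K := x ^ (d 0) * y ^ (d 1)

def valu (d : Fin 2 →₀ ℕ) : ℕ := 4 * d 0 + 5 * d 1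

/-- canonical monomial of value `n` -/
noncomputable def Mon (n : ℕ) : Fin 2 →₀ ℕ :=
  Finsupp.single 0 ((n - 5 * (n % 4)) / 4) + Finsupp.single 1 (n % 4)

lemma Mon_apply0 (n : ℕ) : Mon n 0 = (n - 5 * (n % 4)) / 4 := by
  simp [Mon]

lemma Mon_apply1 (n : ℕ) : Mon n 1 = n % 4 := by
  rw [Mon]
  rw [Finsupp.add_apply, Finsupp.single_apply, Finsupp.single_apply]
  norm_num

lemma valu_Mon (n : ℕ) (hn : 12 ≤ n) : valu (Mon n) = n := by
  rw [valu, Mon_apply0, Mon_apply1]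
  omega

lemma Mon_of_good (d : Fin 2 →₀ ℕ) (h1 : d 1 < 4) : Mon (valu d) = d := by
  ext i
  have hv : valu d = 4 * d 0 + 5 * d 1 := rfl
  have hmod : valu d % 4 = d 1 := by rw [hv]; omega
  fin_cases i
  · show Mon (valu d) 0 = d 0
    rw [Mon_apply0, hmod, hv]
    omega
  · show Mon (valu d) 1 = d 1
    rw [Mon_apply1, hmod]

lemma van_Psi (hx : Van 4 x) (hy : Van 5 y) (d : Fin 2 →₀ ℕ) : Van (valu d) (Psi x y d) := by
  have := ((hx.pow (d 0)).mul (hy.pow (d 1)))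
  refine this.mono ?_
  rw [valu]; omega

lemma coeff_lead_Psi (hx : Van 4 x) (hy : Van 5 y)
    (hx1 : PowerSeries.coeff 4 x = 1) (hy1 : PowerSeries.coeff 5 y = 1)
    (d : Fin 2 →₀ ℕ) :
    PowerSeries.coeff (valu d) (Psi x y d) = 1 := by
  have h0 : Van (d 0 * 4) (x ^ d 0) := by simpa using hx.pow (d 0)
  have h1 : Van (d 1 * 5) (y ^ d 1) := by simpa using hy.pow (d 1)
  have : valu d = d 0 * 4 + d 1 * 5 := by rw [valu]; ring
  rw [Psi, this, coeff_lead_mul h0 h1, coeff_lead_pow hx (d 0), coeff_lead_pow hy (d 1),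
    hx1, hy1, one_pow, one_pow, one_mul]

variable (target : PowerSeries K)

/-- remainders of the reduction process -/
noncomputable def rem : ℕ → PowerSeries K
  | 0 => target
  | n + 1 => rem n - (if 12 ≤ n then
      PowerSeries.C (R := K) (PowerSeries.coeff n (rem n)) * Psi x y (Mon n) else 0)

/-- the reduction coefficients -/
noncomputable def gam (n : ℕ) : K := PowerSeries.coeff n (rem x y target n)

lemma coeff_rem (hx : Van 4 x) (hy : Van 5 y)
    (hx1 : PowerSeries.coeff 4 x = 1) (hy1 : PowerSeries.coeff 5 y = 1)
    (htarget : Van 12 target) (n m : ℕ) (hm : m < n ∨ m < 12) :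
    PowerSeries.coeff m (rem x y target n) = 0 := by
  induction n with
  | zero =>
    rcases hm with h | h
    · omega
    · exact (van_iff 12 target).mp htarget m h
  | succ n ih =>
    rw [rem]
    by_cases hn : 12 ≤ n
    · rw [if_pos hn, map_sub, PowerSeries.coeff_C_mul]
      rcases Nat.lt_or_ge m n with hlt | hge
      · have hv := van_Psi x y hx hy (Mon n)
        rw [valu_Mon n hn] at hv
        rw [ih (Or.inl hlt), (van_iff n _).mp hv m hlt, mul_zero, sub_zero]
      · have hmn : m = n := by omega
        subst hmn
        have hl := coeff_lead_Psi x y hx hy hx1 hy1 (Mon m)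
        rw [valu_Mon m hn] at hl
        rw [hl, mul_one, sub_self]
    · rw [if_neg hn, sub_zero]
      apply ih
      omega

lemma rem_eq (hx : Van 4 x) (hy : Van 5 y)
    (hx1 : PowerSeries.coeff 4 x = 1) (hy1 : PowerSeries.coeff 5 y = 1)
    (htarget : Van 12 target) (n : ℕ) :
    rem x y target n = target - ∑ m ∈ Finset.Ico 12 n,
      PowerSeries.C (R := K) (gam x y target m) * Psi x y (Mon m) := by
  induction n with
  | zero =>
    rw [show rem x y target 0 = target from rfl]
    simp
  | succ n ih =>
    rw [rem]
    by_cases hn : 12 ≤ n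
    · have hgam : gam x y target n = PowerSeries.coeff n (target -
          ∑ m ∈ Finset.Ico 12 n, PowerSeries.C (R := K) (gam x y target m) * Psi x y (Mon m)) := by
        rw [← ih]; rfl
      rw [if_pos hn, Finset.sum_Ico_succ_top hn, ih, hgam]
      ring
    · rw [if_neg hn, ih, sub_zero]
      have : Finset.Ico 12 n = Finset.Ico 12 (n+1) := by
        rw [Finset.Ico_eq_empty (by omega), Finset.Ico_eq_empty (by omega)]
      rw [this]

/-- the constructed preimage -/
noncomputable def Ered : MvPowerSeries (Fin 2) K :=
  fun d => if d 1 < 4 ∧ 12 ≤ valu d then gam x y target (valu d) else 0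

lemma coeff_Ered (d : Fin 2 →₀ ℕ) :
    MvPowerSeries.coeff d (Ered x y target)
      = if d 1 < 4 ∧ 12 ≤ valu d then gam x y target (valu d) else 0 := rfl

lemma deg_fin2 (d : Fin 2 →₀ ℕ) : deg d = d 0 + d 1 := by
  have : deg d = ∑ i ∈ Finset.univ, d i := by simp [deg, Finsupp.sum_fintype]
  rw [this, Fin.sum_univ_two]

lemma Ered_van2 : Van 2 (Ered x y target) := by
  intro e he
  rw [coeff_Ered]
  rw [deg_fin2] at he
  have : ¬ (e 1 < 4 ∧ 12 ≤ valu e) := by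
    rw [valu]; omega
  rw [if_neg this]

lemma gsubst_Ered (hx : Van 4 x) (hy : Van 5 y)
    (hx1 : PowerSeries.coeff 4 x = 1) (hy1 : PowerSeries.coeff 5 y = 1)
    (htarget : Van 12 target) :
    gsubst ![x, y] (Ered x y target) = target := by
  apply PowerSeries.ext; intro n
  have hprod : ∀ d : Fin 2 →₀ ℕ, (∏ i, ![x,y] i ^ d i) = Psi x y d := by
    intro d
    rw [Fin.prod_univ_two]
    rfl
  have h1' : PowerSeries.coeff n (gsubst ![x,y] (Ered x y target))
      = ∑ d ∈ box (Fin 2) n, MvPowerSeries.coeff d (Ered x y target)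
          * PowerSeries.coeff n (Psi x y d) := by
    rw [ps_coeff_eq, coeff_gsubst, deg_single_unit]
    exact Finset.sum_congr rfl fun d _ => by rw [hprod d, ← ps_coeff_eq]
  rw [h1']
  -- restrict to good terms
  have step1 : ∑ d ∈ box (Fin 2) n, MvPowerSeries.coeff d (Ered x y target)
          * PowerSeries.coeff n (Psi x y d)
      = ∑ d ∈ (box (Fin 2) n).filter (fun d => d 1 < 4 ∧ 12 ≤ valu d ∧ valu d ≤ n),
          gam x y target (valu d) * PowerSeries.coeff n (Psi x y d) := by
    rw [Finset.sum_filter]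
    refine Finset.sum_congr rfl fun d _ => ?_
    rw [coeff_Ered]
    by_cases h1 : d 1 < 4 ∧ 12 ≤ valu d
    · by_cases h2 : valu d ≤ n
      · rw [if_pos h1, if_pos ⟨h1.1, h1.2, h2⟩]
      · rw [if_pos h1, if_neg (fun hc => h2 hc.2.2)]
        rw [(van_iff (valu d) _).mp (van_Psi x y hx hy d) n (by omega), mul_zero]
    · rw [if_neg h1, if_neg (fun hc => h1 ⟨hc.1, hc.2.1⟩), zero_mul]
  rw [step1]
  -- bijection with Ico 12 (n+1)
  have step2 : ∑ d ∈ (box (Fin 2) n).filter (fun d => d 1 < 4 ∧ 12 ≤ valu d ∧ valu d ≤ n),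
          gam x y target (valu d) * PowerSeries.coeff n (Psi x y d)
      = ∑ m ∈ Finset.Ico 12 (n + 1),
          gam x y target m * PowerSeries.coeff n (Psi x y (Mon m)) := by
    refine Finset.sum_nbij' (fun d => valu d) (fun m => Mon m) ?_ ?_ ?_ ?_ ?_
    · intro d hd
      rw [Finset.mem_filter] at hd
      show valu d ∈ Finset.Ico 12 (n + 1)
      rw [Finset.mem_Ico]
      obtain ⟨-, -, h2, h3⟩ := hd
      omega
    · intro m hm
      rw [Finset.mem_Ico] at hm
      show Mon m ∈ Finset.filter _ _
      rw [Finset.mem_filter]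
      have h12 : 12 ≤ m := hm.1
      refine ⟨mem_box.mpr ?_, ?_, ?_, ?_⟩
      · intro i
        fin_cases i
        · show Mon m 0 ≤ n
          rw [Mon_apply0]; omega
        · show Mon m 1 ≤ n
          rw [Mon_apply1]; omega
      · show Mon m 1 < 4
        rw [Mon_apply1]; omega
      · show 12 ≤ valu (Mon m)
        rw [valu_Mon m h12]; omega
      · show valu (Mon m) ≤ n
        rw [valu_Mon m h12]; omega
    · intro d hd
      rw [Finset.mem_filter] at hd
      show Mon (valu d) = d
      exact Mon_of_good d hd.2.1
    · intro m hm
      rw [Finset.mem_Ico] at hm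
      show valu (Mon m) = m
      exact valu_Mon m hm.1
    · intro d hd
      rw [Finset.mem_filter] at hd
      show gam x y target (valu d) * PowerSeries.coeff n (Psi x y d)
        = gam x y target (valu d) * PowerSeries.coeff n (Psi x y (Mon (valu d)))
      rw [Mon_of_good d hd.2.1]
  rw [step2]
  -- telescoping identity
  have step3 : ∑ m ∈ Finset.Ico 12 (n + 1),
      gam x y target m * PowerSeries.coeff n (Psi x y (Mon m))
      = PowerSeries.coeff n target := by
    have hrem := rem_eq x y target hx hy hx1 hy1 htarget (n + 1)
    have h0 : PowerSeries.coeff n (rem x y target (n + 1)) = 0 :=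
      coeff_rem x y target hx hy hx1 hy1 htarget (n + 1) n (Or.inl (by omega))
    rw [hrem, map_sub, map_sum] at h0
    have : ∀ m ∈ Finset.Ico 12 (n+1),
        PowerSeries.coeff n (PowerSeries.C (R := K) (gam x y target m) * Psi x y (Mon m))
        = gam x y target m * PowerSeries.coeff n (Psi x y (Mon m)) := fun m _ => by
      rw [PowerSeries.coeff_C_mul]
    rw [Finset.sum_congr rfl this] at h0
    exact (sub_eq_zero.mp h0).symm
  rw [step3]

end Reduce


section Main
open scoped Classical

variable {K : Type*} [Field K] [CharP K 2] (a c : K)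

-- abbreviations (locally)
local notation "Xp" => (PowerSeries.X : PowerSeries K)
local notation "Ca" => (PowerSeries.C (R := K) a)
local notation "Cc" => (PowerSeries.C (R := K) c)

/-- the data series -/
noncomputable def xser : PowerSeries K :=
  PowerSeries.X ^ 4 + PowerSeries.X ^ 6 + PowerSeries.C (R := K) a * PowerSeries.X ^ 7
    + PowerSeries.C (R := K) a * PowerSeries.C (R := K) c * PowerSeries.X ^ 11

noncomputable def xbser : PowerSeries K :=
  PowerSeries.X ^ 4 + PowerSeries.X ^ 6 + PowerSeries.C (R := K) a * PowerSeries.X ^ 7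

noncomputable def yser : PowerSeries K := PowerSeries.X ^ 5

noncomputable def hUser : PowerSeries K :=
  PowerSeries.C (R := K) c * PowerSeries.X ^ 5 + PowerSeries.C (R := K) c * PowerSeries.X ^ 7

noncomputable def user : PowerSeries K := PowerSeries.X + hUser c

noncomputable def T1ser : PowerSeries K :=
  user c ^ 4 + user c ^ 6 + PowerSeries.C (R := K) a * user c ^ 7 - xser a c

noncomputable def T2ser : PowerSeries K :=
  user c ^ 5 - (yser + PowerSeries.C (R := K) c * xser a c * yser)

lemma two_eq_zero' : (2 : PowerSeries K) = 0 := by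
  have h : (2 : K) = 0 := CharTwo.two_eq_zero
  rw [show (2 : PowerSeries K) = PowerSeries.C (R := K) 2 from (map_ofNat (PowerSeries.C (R := K)) 2).symm,
    h, map_zero]

lemma T1_eq : T1ser a c =
      (Ca * Cc) * Xp ^ 13
      + (Cc^2) * Xp ^ 14
      + (Ca * Cc^2) * Xp ^ 15
      + (Cc^2) * Xp ^ 18
      + (Ca * Cc^2) * Xp ^ 19
      + (Ca * Cc^3) * Xp ^ 19
      + (Cc^4) * Xp ^ 20
      + (Ca * Cc^3) * Xp ^ 21
      + (Cc^4) * Xp ^ 22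
      + (Ca * Cc^3) * Xp ^ 23
      + (Ca * Cc^4) * Xp ^ 23
      + (Ca * Cc^3) * Xp ^ 25
      + (Ca * Cc^5) * Xp ^ 27
      + (Cc^4) * Xp ^ 28
      + (Ca * Cc^5) * Xp ^ 29
      + (Cc^4) * Xp ^ 30
      + (Cc^6) * Xp ^ 30
      + (Ca * Cc^4) * Xp ^ 31
      + (Ca * Cc^6) * Xp ^ 31
      + (Cc^6) * Xp ^ 34
      + (Ca * Cc^5) * Xp ^ 35
      + (Ca * Cc^6) * Xp ^ 35
      + (Ca * Cc^7) * Xp ^ 35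
      + (Ca * Cc^5) * Xp ^ 37
      + (Ca * Cc^7) * Xp ^ 37
      + (Cc^6) * Xp ^ 38
      + (Ca * Cc^6) * Xp ^ 39
      + (Ca * Cc^7) * Xp ^ 39
      + (Ca * Cc^7) * Xp ^ 41
      + (Cc^6) * Xp ^ 42
      + (Ca * Cc^6) * Xp ^ 43
      + (Ca * Cc^7) * Xp ^ 43
      + (Ca * Cc^7) * Xp ^ 45
      + (Ca * Cc^7) * Xp ^ 47
      + (Ca * Cc^7) * Xp ^ 49 := by
  have h2 : (2 : PowerSeries K) = 0 := two_eq_zero'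
  rw [T1ser, user, hUser, xser]
  linear_combination ((2 * Cc) * Xp ^ 8
    + (5 * Cc) * Xp ^ 10
    + (3 * Ca * Cc) * Xp ^ 11
    + (3 * Cc^2) * Xp ^ 12
    + (3 * Cc) * Xp ^ 12
    + (3 * Ca * Cc) * Xp ^ 13
    + (13 * Cc^2) * Xp ^ 14
    + (10 * Ca * Cc^2) * Xp ^ 15
    + (18 * Cc^2) * Xp ^ 16
    + (2 * Cc^3) * Xp ^ 16
    + (21 * Ca * Cc^2) * Xp ^ 17
    + (16 * Cc^3) * Xp ^ 18
    + (7 * Cc^2) * Xp ^ 18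
    + (10 * Ca * Cc^2) * Xp ^ 19
    + (17 * Ca * Cc^3) * Xp ^ 19
    + (36 * Cc^3) * Xp ^ 20
    + (52 * Ca * Cc^3) * Xp ^ 21
    + (32 * Cc^3) * Xp ^ 22
    + (9 * Cc^4) * Xp ^ 22
    + (52 * Ca * Cc^3) * Xp ^ 23
    + (17 * Ca * Cc^4) * Xp ^ 23
    + (33 * Cc^4) * Xp ^ 24
    + (10 * Cc^3) * Xp ^ 24
    + (17 * Ca * Cc^3) * Xp ^ 25
    + (70 * Ca * Cc^4) * Xp ^ 25
    + (47 * Cc^4) * Xp ^ 26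
    + (3 * Cc^5) * Xp ^ 26
    + (105 * Ca * Cc^4) * Xp ^ 27
    + (10 * Ca * Cc^5) * Xp ^ 27
    + (30 * Cc^4) * Xp ^ 28
    + (15 * Cc^5) * Xp ^ 28
    + (70 * Ca * Cc^4) * Xp ^ 29
    + (52 * Ca * Cc^5) * Xp ^ 29
    + (7 * Cc^4) * Xp ^ 30
    + (30 * Cc^5) * Xp ^ 30
    + (17 * Ca * Cc^4) * Xp ^ 31
    + (105 * Ca * Cc^5) * Xp ^ 31
    + (3 * Ca * Cc^6) * Xp ^ 31
    + (30 * Cc^5) * Xp ^ 32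
    + (3 * Cc^6) * Xp ^ 32
    + (105 * Ca * Cc^5) * Xp ^ 33
    + (21 * Ca * Cc^6) * Xp ^ 33
    + (15 * Cc^5) * Xp ^ 34
    + (7 * Cc^6) * Xp ^ 34
    + (52 * Ca * Cc^5) * Xp ^ 35
    + (52 * Ca * Cc^6) * Xp ^ 35
    + (3 * Cc^5) * Xp ^ 36
    + (10 * Cc^6) * Xp ^ 36
    + (10 * Ca * Cc^5) * Xp ^ 37
    + (70 * Ca * Cc^6) * Xp ^ 37
    + (3 * Ca * Cc^7) * Xp ^ 37
    + (7 * Cc^6) * Xp ^ 38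
    + (52 * Ca * Cc^6) * Xp ^ 39
    + (10 * Ca * Cc^7) * Xp ^ 39
    + (3 * Cc^6) * Xp ^ 40
    + (21 * Ca * Cc^6) * Xp ^ 41
    + (17 * Ca * Cc^7) * Xp ^ 41
    + (3 * Ca * Cc^6) * Xp ^ 43
    + (17 * Ca * Cc^7) * Xp ^ 43
    + (10 * Ca * Cc^7) * Xp ^ 45
    + (3 * Ca * Cc^7) * Xp ^ 47) * h2

lemma T2_eq : T2ser a c =
      (Ca * Cc) * Xp ^ 12
      + (Ca * Cc^2) * Xp ^ 16
      + (Cc^4) * Xp ^ 21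
      + (Cc^5) * Xp ^ 25
      + (Cc^5) * Xp ^ 27
      + (Cc^4) * Xp ^ 29
      + (Cc^5) * Xp ^ 33
      + (Cc^5) * Xp ^ 35 := by
  have h2 : (2 : PowerSeries K) = 0 := two_eq_zero'
  rw [T2ser, user, hUser, xser, yser]
  linear_combination ((2 * Cc) * Xp ^ 9
    + (2 * Cc) * Xp ^ 11
    + ((-1) * Ca * Cc) * Xp ^ 12
    + (5 * Cc^2) * Xp ^ 13
    + (10 * Cc^2) * Xp ^ 15
    + ((-1) * Ca * Cc^2) * Xp ^ 16
    + (5 * Cc^2) * Xp ^ 17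
    + (5 * Cc^3) * Xp ^ 17
    + (15 * Cc^3) * Xp ^ 19
    + (15 * Cc^3) * Xp ^ 21
    + (2 * Cc^4) * Xp ^ 21
    + (5 * Cc^3) * Xp ^ 23
    + (10 * Cc^4) * Xp ^ 23
    + (15 * Cc^4) * Xp ^ 25
    + (10 * Cc^4) * Xp ^ 27
    + (2 * Cc^5) * Xp ^ 27
    + (2 * Cc^4) * Xp ^ 29
    + (5 * Cc^5) * Xp ^ 29
    + (5 * Cc^5) * Xp ^ 31
    + (2 * Cc^5) * Xp ^ 33) * h2

lemma van0 {τ' : Type*} (f : MvPowerSeries τ' K) : Van 0 f :=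
  fun _ he => absurd he (Nat.not_lt_zero _)

lemma van_CX (q : PowerSeries K) (k : ℕ) (hk : 12 ≤ k) :
    Van 12 (q * (PowerSeries.X : PowerSeries K) ^ k) := by
  have hX : Van k ((PowerSeries.X : PowerSeries K) ^ k) := by
    have := (van_X () (K := K)).pow k
    rw [mul_one] at this; exact this
  have := (van0 q).mul hX
  rw [zero_add] at this
  exact this.mono hk

lemma T1_van : Van 12 (T1ser a c) := by
  rw [T1_eq]
  repeat' apply Van.add'
  all_goals apply van_CX
  all_goals norm_num

lemma T2_van : Van 12 (T2ser a c) := by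
  rw [T2_eq]
  repeat' apply Van.add'
  all_goals apply van_CX
  all_goals norm_num


lemma van_Xpow (k m : ℕ) (hm : m ≤ k) : Van m ((PowerSeries.X : PowerSeries K) ^ k) := by
  have := (van_X () (K := K)).pow k
  rw [mul_one] at this
  exact this.mono hm

lemma van_CXpow (q : PowerSeries K) (k m : ℕ) (hm : m ≤ k) :
    Van m (q * (PowerSeries.X : PowerSeries K) ^ k) := by
  have := (van0 q).mul (van_Xpow k m hm)
  rw [zero_add] at this
  exact this

lemma xser_van : Van 4 (xser a c) := by
  rw [xser]
  refine ((Van.add' ?_ ?_).add' ?_).add' ?_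
  · exact van_Xpow 4 4 le_rfl
  · exact van_Xpow 6 4 (by norm_num)
  · exact van_CXpow _ 7 4 (by norm_num)
  · have : PowerSeries.C (R := K) a * PowerSeries.C (R := K) c * PowerSeries.X ^ 11
        = (PowerSeries.C (R := K) a * PowerSeries.C (R := K) c) * PowerSeries.X ^ 11 := by ring
    rw [this]
    exact van_CXpow _ 11 4 (by norm_num)

lemma yser_van : Van 5 (yser : PowerSeries K) := van_Xpow 5 5 le_rfl

lemma xser_lead : PowerSeries.coeff 4 (xser a c) = 1 := by
  rw [xser]
  simp [PowerSeries.coeff_X_pow, mul_assoc]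

lemma yser_lead : PowerSeries.coeff 5 (yser : PowerSeries K) = 1 := by
  rw [yser]
  simp [PowerSeries.coeff_X_pow]

lemma hU_van2 : ∀ i : Unit, Van 2 ((fun _ : Unit => hUser c) i) := by
  intro i
  show Van 2 (hUser c)
  rw [hUser]
  exact (van_CXpow _ 5 2 (by norm_num)).add' (van_CXpow _ 7 2 (by norm_num))

/-- the two correction series in two variables -/
noncomputable def E1 : MvPowerSeries (Fin 2) K := Ered (xser a c) yser (T1ser a c)
noncomputable def E2 : MvPowerSeries (Fin 2) K := Ered (xser a c) yser (T2ser a c)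

noncomputable def hlf : Fin 2 → MvPowerSeries (Fin 2) K :=
  ![E1 a c,
    MvPowerSeries.C (σ := (Fin 2)) (R := K) c * (MvPowerSeries.X 0 * MvPowerSeries.X 1) + E2 a c]

lemma hl_van : ∀ i, Van 2 (hlf a c i) := by
  intro i
  fin_cases i
  · show Van 2 (E1 a c)
    exact Ered_van2 _ _ _
  · show Van 2 (MvPowerSeries.C (σ := (Fin 2)) (R := K) c
      * (MvPowerSeries.X 0 * MvPowerSeries.X 1) + E2 a c)
    refine Van.add' ?_ (Ered_van2 _ _ _)
    have h01 : Van 2 ((MvPowerSeries.X 0 : MvPowerSeries (Fin 2) K) * MvPowerSeries.X 1) := by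
      have := (van_X (0 : Fin 2) (K := K)).mul (van_X (1 : Fin 2) (K := K))
      simpa using this
    have := (van0 (MvPowerSeries.C (σ := (Fin 2)) (R := K) c)).mul h01
    rw [zero_add] at this
    exact this

lemma hgxy : ∀ i, Van 1 (![xser a c, yser] i) := by
  intro i
  fin_cases i
  · show Van 1 (xser a c)
    exact (xser_van a c).mono (by norm_num)
  · show Van 1 (yser : PowerSeries K)
    exact yser_van.mono (by norm_num)

lemma psi_E1 : gsubst ![xser a c, yser] (E1 a c) = T1ser a c :=
  gsubst_Ered (xser a c) yser (T1ser a c) (xser_van a c) yser_van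
    (xser_lead a c) yser_lead (T1_van a c)

lemma psi_E2 : gsubst ![xser a c, yser] (E2 a c) = T2ser a c :=
  gsubst_Ered (xser a c) yser (T2ser a c) (xser_van a c) yser_van
    (xser_lead a c) yser_lead (T2_van a c)

lemma W_user : gsubst (ginv (fun _ : Unit => hUser c)) (user c) = PowerSeries.X := by
  have : user c = MvPowerSeries.X () + (fun _ : Unit => hUser c) () := rfl
  rw [this, ginv_comp_X (fun _ : Unit => hUser c) (hU_van2 c) ()]
  rfl

lemma comp0 :
    gsubst (ginv (fun _ : Unit => hUser c))
      (gsubst ![xser a c, yser] (MvPowerSeries.X 0 + hlf a c 0)) = xbser a := by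
  have hW : ∀ i : Unit, Van 1 (ginv (fun _ : Unit => hUser c) i) :=
    ginv_van _ (hU_van2 c)
  have h0 : hlf a c 0 = E1 a c := rfl
  rw [h0, gsubst_add, gsubst_X _ (hgxy a c), psi_E1]
  have hsum : ![xser a c, yser] 0 + T1ser a c
      = user c ^ 4 + user c ^ 6 + PowerSeries.C (R := K) a * user c ^ 7 := by
    show xser a c + T1ser a c = _
    rw [T1ser]
    ring
  rw [hsum, gsubst_add, gsubst_add, gsubst_mul _ hW]
  have hp4 := map_pow (gsubstHom (ginv (fun _ : Unit => hUser c)) hW) (user c) 4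
  have hp6 := map_pow (gsubstHom (ginv (fun _ : Unit => hUser c)) hW) (user c) 6
  have hp7 := map_pow (gsubstHom (ginv (fun _ : Unit => hUser c)) hW) (user c) 7
  simp only [gsubstHom_apply] at hp4 hp6 hp7
  rw [hp4, hp6, hp7, W_user]
  have hC : gsubst (ginv (fun _ : Unit => hUser c)) (PowerSeries.C (R := K) a)
      = PowerSeries.C (R := K) a := gsubst_C _ hW a
  rw [hC, xbser]

lemma comp1 :
    gsubst (ginv (fun _ : Unit => hUser c))
      (gsubst ![xser a c, yser] (MvPowerSeries.X 1 + hlf a c 1)) = yser := by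
  have hW : ∀ i : Unit, Van 1 (ginv (fun _ : Unit => hUser c) i) :=
    ginv_van _ (hU_van2 c)
  have h1 : hlf a c 1 = MvPowerSeries.C (σ := (Fin 2)) (R := K) c
      * (MvPowerSeries.X 0 * MvPowerSeries.X 1) + E2 a c := rfl
  have hinner : gsubst ![xser a c, yser] (MvPowerSeries.X 1
      + (MvPowerSeries.C (σ := (Fin 2)) (R := K) c * (MvPowerSeries.X 0 * MvPowerSeries.X 1) + E2 a c))
      = user c ^ 5 := by
    rw [gsubst_add, gsubst_X _ (hgxy a c), gsubst_add, gsubst_mul _ (hgxy a c),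
      gsubst_mul _ (hgxy a c), gsubst_C _ (hgxy a c), gsubst_X _ (hgxy a c),
      gsubst_X _ (hgxy a c), psi_E2]
    show yser + (PowerSeries.C (R := K) c * (xser a c * yser) + T2ser a c) = _
    rw [T2ser]
    ring
  rw [h1, hinner]
  have hp5 := map_pow (gsubstHom (ginv (fun _ : Unit => hUser c)) hW) (user c) 5
  simp only [gsubstHom_apply] at hp5
  rw [hp5, W_user]
  rfl

end Main

end S11



namespace S11
section Final
variable [CharP K 2]

lemma substPair_eq_gsubst (A B : PowerSeries K) (f : MvPowerSeries (Fin 2) K) :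
    substPair A B f = gsubst ![A, B] f := by
  apply PowerSeries.ext; intro n
  rw [substPair, PowerSeries.coeff_mk, ps_coeff_eq, coeff_gsubst, deg_single_unit]
  have happ : ∀ p : ℕ × ℕ, ∀ i : Fin 2,
      ((Finsupp.single (0 : Fin 2) p.1 + Finsupp.single 1 p.2 : Fin 2 →₀ ℕ)) i
        = if i = 0 then p.1 else p.2 := by
    intro p i
    fin_cases i
    · simp
    · simp
  refine Finset.sum_nbij' (fun p => Finsupp.single (0 : Fin 2) p.1 + Finsupp.single 1 p.2)
    (fun d => (d 0, d 1)) ?_ ?_ ?_ ?_ ?_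
  · intro p hp
    rw [Finset.mem_product, Finset.mem_range, Finset.mem_range] at hp
    show (Finsupp.single (0 : Fin 2) p.1 + Finsupp.single 1 p.2) ∈ box (Fin 2) n
    rw [mem_box]
    intro i
    rw [happ]
    split <;> omega
  · intro d hd
    rw [mem_box] at hd
    show (d 0, d 1) ∈ _
    rw [Finset.mem_product, Finset.mem_range, Finset.mem_range]
    exact ⟨by have := hd 0; omega, by have := hd 1; omega⟩
  · intro p hp
    show ((Finsupp.single (0 : Fin 2) p.1 + Finsupp.single 1 p.2 : Fin 2 →₀ ℕ) 0,
          (Finsupp.single (0 : Fin 2) p.1 + Finsupp.single 1 p.2 : Fin 2 →₀ ℕ) 1) = p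
    rw [happ, happ]
    simp
  · intro d hd
    show Finsupp.single (0 : Fin 2) (d 0) + Finsupp.single 1 (d 1) = d
    ext i
    rw [happ (d 0, d 1) i]
    fin_cases i <;> simp
  · intro p hp
    show mvCoeff f p * PowerSeries.coeff n (A ^ p.1 * B ^ p.2) = _
    rw [mvCoeff]
    congr 1
    rw [ps_coeff_eq]
    congr 1
    rw [Fin.prod_univ_two, happ, happ]
    simp


theorem aux (a b : K) (ha : a ≠ 0) :
    AEquiv ((PowerSeries.X : PowerSeries K) ^ 4 + PowerSeries.X ^ 6
          + PowerSeries.C (R := K) a * PowerSeries.X ^ 7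
          + PowerSeries.C (R := K) b * PowerSeries.X ^ 11,
        PowerSeries.X ^ 5)
      ((PowerSeries.X : PowerSeries K) ^ 4 + PowerSeries.X ^ 6
          + PowerSeries.C (R := K) a * PowerSeries.X ^ 7,
        PowerSeries.X ^ 5) := by
  set c := b * a⁻¹ with hc
  have hxrw : (PowerSeries.X ^ 4 + PowerSeries.X ^ 6 + PowerSeries.C (R := K) a * PowerSeries.X ^ 7
      + PowerSeries.C (R := K) b * PowerSeries.X ^ 11 : PowerSeries K) = xser a c := by
    rw [xser]
    have hb : PowerSeries.C (R := K) b = PowerSeries.C (R := K) a * PowerSeries.C (R := K) c := by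
      rw [← map_mul]
      congr 1
      rw [hc]
      field_simp
    rw [hb]
  refine ⟨gAut (hlf a c) (hl_van a c), gAut' (fun _ : Unit => hUser c) (hU_van2 c), ?_⟩
  intro f
  rw [gAut_apply, gAut'_apply]
  show substPair ((PowerSeries.X : PowerSeries K) ^ 4 + PowerSeries.X ^ 6
      + PowerSeries.C (R := K) a * PowerSeries.X ^ 7) (PowerSeries.X ^ 5) f
    = gsubst (ginv (fun _ : Unit => hUser c))
        (substPair (PowerSeries.X ^ 4 + PowerSeries.X ^ 6
            + PowerSeries.C (R := K) a * PowerSeries.X ^ 7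
            + PowerSeries.C (R := K) b * PowerSeries.X ^ 11) (PowerSeries.X ^ 5)
          (gsubst (fun i => MvPowerSeries.X i + hlf a c i) f))
  rw [hxrw]
  rw [show ((PowerSeries.X : PowerSeries K) ^ 4 + PowerSeries.X ^ 6
      + PowerSeries.C (R := K) a * PowerSeries.X ^ 7) = xbser a from rfl]
  rw [show ((PowerSeries.X : PowerSeries K) ^ 5) = (yser : PowerSeries K) from rfl]
  rw [substPair_eq_gsubst, substPair_eq_gsubst]
  have hgl : ∀ i, Van 1 ((fun i => MvPowerSeries.X i + hlf a c i) i) :=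
    fun i => (van_X i).add' ((hl_van a c i).mono (by norm_num))
  rw [gsubst_gsubst (fun i => MvPowerSeries.X i + hlf a c i) ![xser a c, yser]
    hgl (hgxy a c) f]
  have hmid : ∀ i, Van 1 ((fun i => gsubst ![xser a c, yser]
      ((fun i => MvPowerSeries.X i + hlf a c i) i)) i) :=
    fun i => (hgl i).gsubst _ (hgxy a c)
  rw [gsubst_gsubst _ (ginv (fun _ : Unit => hUser c)) hmid (ginv_van _ (hU_van2 c)) f]
  have hfam : (fun i => gsubst (ginv (fun _ : Unit => hUser c))
      (gsubst ![xser a c, yser] ((fun i => MvPowerSeries.X i + hlf a c i) i)))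
      = ![xbser a, yser] := by
    funext i
    fin_cases i
    · show gsubst (ginv (fun _ : Unit => hUser c))
        (gsubst ![xser a c, yser] (MvPowerSeries.X 0 + hlf a c 0)) = xbser a
      exact comp0 a c
    · show gsubst (ginv (fun _ : Unit => hUser c))
        (gsubst ![xser a c, yser] (MvPowerSeries.X 1 + hlf a c 1)) = yser
      exact comp1 a c
  rw [hfam]


end Final
end S11

/-- in characteristic `2`, for `a ≠ 0`,
`(t⁴ + t⁶ + a·t⁷ + b·t^{11}, t⁵) ∼_𝒜 (t⁴ + t⁶ + a·t⁷, t⁵)`. -/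
theorem statement_11 [IsAlgClosed K] [CharP K 2] (a b : K) (ha : a ≠ 0) :
    AEquiv ((PowerSeries.X : PowerSeries K) ^ 4 + PowerSeries.X ^ 6
          + PowerSeries.C (R := K) a * PowerSeries.X ^ 7
          + PowerSeries.C (R := K) b * PowerSeries.X ^ 11,
        PowerSeries.X ^ 5)
      ((PowerSeries.X : PowerSeries K) ^ 4 + PowerSeries.X ^ 6
          + PowerSeries.C (R := K) a * PowerSeries.X ^ 7,
        PowerSeries.X ^ 5) := by
  exact S11.aux a b ha
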